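/- Under the reduction construction—Ω = S ∪ S̄ ∪ {z} with uniform measure, E = {z}, facts Fᵢ = Aᵢ ∪ (S̄ \ Āᵢ) ∪ {z}, threshold p = 1—there exists a nonempty subset R ⊆ {F₁,…,Fₙ} with π(E | ⋂_{F∈R} F) ≥ 1 if and only if there exists a nonempty I ⊆ {1,…,n} such that ⋂_{i∈I} Aᵢ = ∅ and ⋃_{i∈I} Aᵢ = S. -/

import Mathlib

open Finset

/-- Probability of a finset under the uniform measure on a finite type. -/
def unifP (Ω : Type*) [Fintype Ω] [DecidableEq Ω] (A : Finset Ω) : ℚ :=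
  (A.card : ℚ) / (Fintype.card Ω : ℚ)

/-- Conditional probability `π(E | F) = π(E ∩ F) / π(F)` under the uniform measure. -/
def condP (Ω : Type*) [Fintype Ω] [DecidableEq Ω] (E F : Finset Ω) : ℚ :=
  unifP Ω (E ∩ F) / unifP Ω F

/-- The reduction construction. `S` is a finite set (modeled as `univ` over a
finite type `β`), `Ω = S ⊔ S̄ ⊔ {z}` is modeled as `Option (β × Bool)` with `z = none`,
original elements `some (b, false)` and barred copies `some (b, true)`. Facts are
`F i = A i ∪ (S̄ \ Ā i) ∪ {z}`, the focal event `E = {z}`, the threshold `p = 1`.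
There is a nonempty report `I` with `π(E | ⋂_{i∈I} F i) ≥ 1` iff there is a nonempty `I`
with `⋂_{i∈I} A i = ∅` and `⋃_{i∈I} A i = S`. -/
theorem stmt4 (β : Type*) [Fintype β] [DecidableEq β]
    (n : ℕ) (A : Fin n → Finset β)
    (F : Fin n → Finset (Option (β × Bool)))
    (hF : ∀ i, F i = (A i).image (fun b => some (b, false)) ∪
      ((Finset.univ \ A i).image (fun b => some (b, true))) ∪ {none})
    (E : Finset (Option (β × Bool))) (hE : E = {none}) :
    (∃ I : Finset (Fin n), I.Nonempty ∧ condP (Option (β × Bool)) E (I.inf F) ≥ 1) ↔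
    (∃ I : Finset (Fin n), I.Nonempty ∧ I.inf A = ∅ ∧ I.sup A = Finset.univ) := by
  subst hE
  have hmemFf : ∀ (i : Fin n) (b : β), some (b, false) ∈ F i ↔ b ∈ A i := by
    intro i b; rw [hF]; simp
  have hmemFt : ∀ (i : Fin n) (b : β), some (b, true) ∈ F i ↔ b ∉ A i := by
    intro i b; rw [hF]; simp
  have hnone : ∀ I : Finset (Fin n), (none : Option (β × Bool)) ∈ I.inf F := by
    intro I
    rw [Finset.mem_inf]
    intro i _
    rw [hF]; simp
  have hEF : ∀ I : Finset (Fin n),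
      ({none} : Finset (Option (β × Bool))) ∩ I.inf F = {none} := by
    intro I
    apply Finset.inter_eq_left.mpr
    exact Finset.singleton_subset_iff.mpr (hnone I)
  have hN : (0 : ℚ) < (Fintype.card (Option (β × Bool)) : ℚ) := by
    exact_mod_cast Fintype.card_pos
  have hk : ∀ I : Finset (Fin n), 0 < ((I.inf F).card : ℚ) := by
    intro I
    exact_mod_cast Finset.card_pos.mpr ⟨none, hnone I⟩
  have hcond : ∀ I : Finset (Fin n),
      condP (Option (β × Bool)) {none} (I.inf F) = 1 / ((I.inf F).card : ℚ) := by
    intro I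
    unfold condP unifP
    rw [hEF I]
    rw [Finset.card_singleton]
    push_cast
    rw [div_div_div_eq, one_mul, mul_comm, ← div_div, div_right_comm, div_self hN.ne']
  have key : ∀ I : Finset (Fin n),
      (condP (Option (β × Bool)) {none} (I.inf F) ≥ 1 ↔ I.inf F = {none}) := by
    intro I
    rw [hcond I, ge_iff_le, one_le_div (hk I)]
    constructor
    · intro h
      have h1 : (I.inf F).card = 1 := by
        have hle : (I.inf F).card ≤ 1 := by exact_mod_cast h
        have hge : 1 ≤ (I.inf F).card := Finset.card_pos.mpr ⟨none, hnone I⟩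
        omega
      obtain ⟨a, ha⟩ := Finset.card_eq_one.mp h1
      have := hnone I
      rw [ha, Finset.mem_singleton] at this
      rw [ha, ← this]
    · intro h; rw [h]; simp
  have key2 : ∀ I : Finset (Fin n),
      (I.inf F = {none} ↔ I.inf A = ∅ ∧ I.sup A = Finset.univ) := by
    intro I
    constructor
    · intro h
      constructor
      · ext b
        simp only [Finset.mem_inf, Finset.notMem_empty, iff_false, not_forall]
        by_contra hc
        push_neg at hc
        have hm : some (b, false) ∈ I.inf F := by
          rw [Finset.mem_inf]
          intro i hi
          exact (hmemFf i b).mpr (hc i hi)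
        rw [h] at hm; simp at hm
      · ext b
        simp only [Finset.mem_univ, iff_true, Finset.mem_sup]
        by_contra hc
        push_neg at hc
        have hm : some (b, true) ∈ I.inf F := by
          rw [Finset.mem_inf]
          intro i hi
          exact (hmemFt i b).mpr (hc i hi)
        rw [h] at hm; simp at hm
    · rintro ⟨h1, h2⟩
      ext x
      simp only [Finset.mem_singleton]
      constructor
      · intro hx
        rw [Finset.mem_inf] at hx
        match x with
        | none => rfl
        | some (b, false) =>
          exfalso
          have hb : b ∈ I.inf A := by
            rw [Finset.mem_inf]
            intro i hi
            have := hx i hi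
            rw [hmemFf] at this
            exact this
          rw [h1] at hb; simp at hb
        | some (b, true) =>
          exfalso
          have hb : b ∉ I.sup A := by
            rw [Finset.mem_sup]
            rintro ⟨i, hi, hbi⟩
            have := hx i hi
            rw [hmemFt] at this
            exact this hbi
          rw [h2] at hb; simp at hb
      · rintro rfl
        exact hnone I
  exact exists_congr fun I =>
    and_congr_right fun _ => (key I).trans (key2 I)
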